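/- If x ∈ Ext(B_J) and n₁ < n₂ are consecutive elements of supp(x), then x(n₁)x(n₂) < 0. -/

import Mathlib

open Filter Topology Classical

noncomputable section

/-- Admissible finite families of pairwise disjoint, increasingly ordered intervals
`[f i .1, f i .2]` of `ℕ`. -/
def Admissible (n : ℕ) (f : Fin n → ℕ × ℕ) : Prop :=
  (∀ i, (f i).1 ≤ (f i).2) ∧ ∀ i j : Fin n, i < j → (f i).2 < (f j).1

/-- The set of estimates appearing in the definition of the James norm. -/
def estimates (x : ℕ → ℝ) : Set ℝ :=
  {r | ∃ n, ∃ f : Fin n → ℕ × ℕ, Admissible n f ∧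
    r = Real.sqrt (∑ i, (∑ k ∈ Finset.Icc (f i).1 (f i).2, x k) ^ 2)}

/-- `x` belongs to the James space `J`. -/
def MemJ (x : ℕ → ℝ) : Prop := BddAbove (estimates x)

/-- The James norm. -/
def jamesNorm (x : ℕ → ℝ) : ℝ := sSup (estimates x)

/-- The ℓ² norm. -/
def l2Norm (x : ℕ → ℝ) : ℝ := Real.sqrt (∑' k, (x k) ^ 2)

/-- The closed unit ball of the James space. -/
def ballJ : Set (ℕ → ℝ) := {x | MemJ x ∧ jamesNorm x ≤ 1}

/-- The support of a sequence. -/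
def supp (x : ℕ → ℝ) : Set ℕ := {n | x n ≠ 0}

/-- The (possibly infinite) sum of `x` over a subset `I` of `ℕ`,
as the limit of the partial sums. -/
def setSum (x : ℕ → ℝ) (I : Set ℕ) : ℝ :=
  limUnder atTop (fun N => ∑ k ∈ Finset.range N, if k ∈ I then x k else 0)

/-- An `x`-norming family: a (finite or infinite) family of pairwise disjoint
nonempty intervals of `ℕ`, indexed by an initial segment `F` of `ℕ`, ordered
increasingly, whose interval sums exist and realize the James norm of `x`. -/
structure NormingFamily (x : ℕ → ℝ) where
  F : Set ℕ
  F_nonempty : F.Nonempty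
  initial : ∀ ⦃m n : ℕ⦄, m ≤ n → n ∈ F → m ∈ F
  I : ℕ → Set ℕ
  I_nonempty : ∀ i ∈ F, (I i).Nonempty
  I_interval : ∀ i ∈ F, (I i).OrdConnected
  ordered : ∀ i ∈ F, ∀ j ∈ F, i < j → ∀ a ∈ I i, ∀ b ∈ I j, a < b
  sums_exist : ∀ i ∈ F, ∃ l : ℝ,
    Tendsto (fun N => ∑ k ∈ Finset.range N, if k ∈ I i then x k else 0) atTop (𝓝 l)
  norming : ∑' i : F, (setSum x (I i)) ^ 2 = (jamesNorm x) ^ 2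

/-- An `x`-norming partition: an `x`-norming family whose intervals cover the
support of `x`, every interval has its minimum in the support, every non-final
interval has its maximum in the support, and the final interval does not extend
beyond the supremum of the support. -/
structure NormingPartition (x : ℕ → ℝ) extends NormingFamily x where
  covers : supp x ⊆ ⋃ i ∈ F, I i
  min_in_supp : ∀ i ∈ F, ∃ m ∈ I i ∩ supp x, ∀ k ∈ I i, m ≤ k
  max_in_supp : ∀ i ∈ F, (∃ j ∈ F, i < j) → ∃ m ∈ I i ∩ supp x, ∀ k ∈ I i, k ≤ m
  bounded_by_supp : ∀ i ∈ F, ∀ k ∈ I i, ∃ m ∈ supp x, k ≤ m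

/-- `n₁ < n₂` are consecutive elements of the support of `x`. -/
def Consecutive (x : ℕ → ℝ) (n₁ n₂ : ℕ) : Prop :=
  n₁ ∈ supp x ∧ n₂ ∈ supp x ∧ n₁ < n₂ ∧ ∀ k, n₁ < k → k < n₂ → x k = 0

end

noncomputable section
def TT (x : ℕ → ℝ) (r : ℕ × ℕ) : ℝ := ∑ k ∈ Finset.Icc r.1 r.2, x k
def val (x : ℕ → ℝ) (L : List (ℕ × ℕ)) : ℝ := (L.map fun r => (TT x r)^2).sum
def AdmL (L : List (ℕ × ℕ)) : Prop := (∀ r ∈ L, r.1 ≤ r.2) ∧ L.Pairwise fun r r' => r.2 < r'.1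
end

lemma val_append (x : ℕ → ℝ) (L₁ L₂ : List (ℕ × ℕ)) :
    val x (L₁ ++ L₂) = val x L₁ + val x L₂ := by simp [val]

lemma val_cons (x : ℕ → ℝ) (r : ℕ × ℕ) (L : List (ℕ × ℕ)) :
    val x (r :: L) = (TT x r)^2 + val x L := by simp [val]

lemma AdmL_replace₂ {L₁ L₂ : List (ℕ × ℕ)} {r r' s s' : ℕ × ℕ}
    (h : AdmL (L₁ ++ r :: r' :: L₂)) (hs : s.1 ≤ s.2) (hs' : s'.1 ≤ s'.2)
    (h1 : r.1 ≤ s.1) (h2 : s.2 < s'.1) (h3 : s'.2 ≤ r'.2) :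
    AdmL (L₁ ++ s :: s' :: L₂) := by
  obtain ⟨hmem, hpw⟩ := h
  constructor
  · intro p hp
    simp only [List.mem_append, List.mem_cons] at hp
    rcases hp with hp | rfl | rfl | hp
    · exact hmem p (by simp [hp])
    · exact hs
    · exact hs'
    · exact hmem p (by simp [hp])
  · simp only [List.pairwise_append, List.pairwise_cons, List.mem_cons, List.mem_append] at hpw ⊢
    obtain ⟨hp1, ⟨hr, hr', hp2⟩, hcross⟩ := hpw
    refine ⟨hp1, ⟨?_, ?_, hp2⟩, ?_⟩
    · rintro a (rfl | ha)
      · exact h2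
      · exact lt_trans h2 (lt_of_le_of_lt (le_trans hs' h3) (hr' a ha))
    · rintro a ha
      exact lt_of_le_of_lt h3 (hr' a ha)
    · rintro a ha b (rfl | rfl | hb)
      · exact lt_of_lt_of_le (hcross a ha r (Or.inl rfl)) h1
      · exact lt_of_lt_of_le (lt_of_lt_of_le (hcross a ha r (Or.inl rfl)) (le_trans h1 hs)) (le_of_lt h2)
      · exact hcross a ha b (Or.inr (Or.inr hb))

lemma AdmL_replace₁ {L₁ L₂ : List (ℕ × ℕ)} {r r' s : ℕ × ℕ}
    (h : AdmL (L₁ ++ r :: r' :: L₂)) (hs : s.1 ≤ s.2)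
    (h1 : r.1 ≤ s.1) (h3 : s.2 ≤ r'.2) :
    AdmL (L₁ ++ s :: L₂) := by
  obtain ⟨hmem, hpw⟩ := h
  constructor
  · intro p hp
    simp only [List.mem_append, List.mem_cons] at hp
    rcases hp with hp | rfl | hp
    · exact hmem p (by simp [hp])
    · exact hs
    · exact hmem p (by simp [hp])
  · simp only [List.pairwise_append, List.pairwise_cons, List.mem_cons, List.mem_append] at hpw ⊢
    obtain ⟨hp1, ⟨hr, hr', hp2⟩, hcross⟩ := hpw
    refine ⟨hp1, ⟨fun a ha => lt_of_le_of_lt h3 (hr' a ha), hp2⟩, ?_⟩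
    rintro a ha b (rfl | hb)
    · exact lt_of_lt_of_le (hcross a ha r (Or.inl rfl)) h1
    · exact hcross a ha b (Or.inr (Or.inr hb))

lemma arith_core (a b u v W : ℝ) (ha : 0 < a) (hb : 0 < b)
    (h1 : W + (u+b)^2 + (v-b)^2 ≤ 1) (h2 : W + (u-a)^2 + (v+a)^2 ≤ 1) :
    W + u^2 + v^2 ≤ 1 - 2*a*b := by
  nlinarith [mul_le_mul_of_nonneg_left h1 ha.le, mul_le_mul_of_nonneg_left h2 hb.le,
    mul_pos ha hb, add_pos ha hb]
open Finset in
lemma sum_Icc_split (x : ℕ → ℝ) (p m q : ℕ) (h1 : p ≤ m) (h2 : m ≤ q) :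
    ∑ k ∈ Icc p q, x k = ∑ k ∈ Icc p m, x k + ∑ k ∈ Icc (m+1) q, x k := by
  rw [← Finset.sum_union (by simp [Finset.disjoint_left, Finset.mem_Icc]; omega)]
  congr 1
  ext k; simp [Finset.mem_Icc, Finset.mem_union]; omega

lemma sum_map_add {α : Type*} (l : List α) (f g : α → ℝ) :
    (l.map fun r => f r + g r).sum = (l.map f).sum + (l.map g).sum := by
  induction l with
  | nil => simp
  | cons a l ih => simp [ih]; ring

lemma sum_map_filter {α : Type*} (l : List α) (g : α → ℝ) (p : α → Bool) :
    ((l.filter p).map g).sum + ((l.filter fun m => !(p m)).map g).sum = (l.map g).sum := by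
  induction l with
  | nil => simp
  | cons a l ih => cases h : p a <;> simp [h, List.filter_cons, ← ih] <;> ring

lemma single_sum (x : ℕ → ℝ) {n₁ n₂ α β : ℕ} (hz : ∀ k, n₁ < k → k < n₂ → x k = 0)
    {m : ℕ} (hm : m ∈ Finset.Icc α β) (hother : ∀ k, α ≤ k → k ≤ β → k ≠ m → n₁ < k ∧ k < n₂) :
    ∑ k ∈ Finset.Icc α β, x k = x m := by
  apply Finset.sum_eq_single_of_mem m hm
  intro k hk hkm
  rw [Finset.mem_Icc] at hk
  exact hz k (hother k hk.1 hk.2 hkm).1 (hother k hk.1 hk.2 hkm).2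

lemma core_bound (x : ℕ → ℝ) (n₁ n₂ : ℕ) (hn : n₁ < n₂)
    (hz : ∀ k, n₁ < k → k < n₂ → x k = 0)
    (ha : 0 < x n₁) (hb : 0 < x n₂) (H : ∀ L, AdmL L → val x L ≤ 1)
    (L₁ L₂ : List (ℕ × ℕ)) (p q p' q' : ℕ)
    (hpn : p ≤ n₁) (hnq : n₁ ≤ q) (hqn : q < n₂) (hnp' : n₁ < p') (hp'n : p' ≤ n₂)
    (hnq' : n₂ ≤ q')
    (hL : AdmL (L₁ ++ (p,q) :: (p',q') :: L₂)) :
    val x (L₁ ++ (p,q) :: (p',q') :: L₂) ≤ 1 - 2 * (x n₁ * x n₂) := by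
  set a := x n₁ with hadef
  set b := x n₂ with hbdef
  set u := TT x (p,q) with hudef
  set v := TT x (p',q') with hvdef
  set W := val x L₁ + val x L₂ with hWdef
  have hval : val x (L₁ ++ (p,q) :: (p',q') :: L₂) = W + u^2 + v^2 := by
    rw [val_append, val_cons, val_cons]; ring
  -- v = b + tail
  have hv : v = b + TT x (n₂+1, q') := by
    rw [hvdef]
    show ∑ k ∈ Finset.Icc p' q', x k = b + ∑ k ∈ Finset.Icc (n₂+1) q', x k
    rw [sum_Icc_split x p' n₂ q' hp'n hnq']
    congr 1
    exact single_sum x hz (Finset.mem_Icc.mpr ⟨hp'n, le_refl _⟩)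
      (fun k h1 h2 h3 => ⟨lt_of_lt_of_le hnp' h1, lt_of_le_of_ne h2 h3⟩)
  -- Mod 3 : W + (u+b)^2 + (v-b)^2 ≤ 1
  have hmod3 : W + (u+b)^2 + (v-b)^2 ≤ 1 := by
    have hTT : TT x (p, n₂) = u + b := by
      rw [hudef]
      show ∑ k ∈ Finset.Icc p n₂, x k = (∑ k ∈ Finset.Icc p q, x k) + b
      rw [sum_Icc_split x p q n₂ (le_trans hpn hnq) (le_of_lt hqn)]
      congr 1
      exact single_sum x hz (Finset.mem_Icc.mpr ⟨by omega, le_refl _⟩)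
        (fun k h1 h2 h3 => ⟨by omega, lt_of_le_of_ne h2 h3⟩)
    rcases eq_or_lt_of_le hnq' with heq | hlt
    · -- q' = n₂ : v = b, drop second interval
      have hv0 : v = b := by
        rw [hv, ← heq]
        have : Finset.Icc (n₂+1) n₂ = ∅ := by
          apply Finset.Icc_eq_empty; omega
        simp [TT, this]
      have hadm := AdmL_replace₁ (s := (p, n₂)) hL (by simpa using le_trans hpn (le_of_lt hn))
        (le_refl _) (by simpa using hnq')
      have := H _ hadm
      rw [val_append, val_cons, hTT] at this
      rw [hv0]
      simpa using by linarith
    · -- n₂ < q'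
      have hadm := AdmL_replace₂ (s := (p, n₂)) (s' := (n₂+1, q')) hL
        (by simpa using le_trans hpn (le_of_lt hn)) (by simpa using hlt)
        (le_refl _) (by simp) (le_refl _)
      have := H _ hadm
      rw [val_append, val_cons, val_cons, hTT] at this
      have hTT2 : TT x (n₂+1, q') = v - b := by rw [hv]; ring
      rw [hTT2] at this
      linarith
  -- Mod 4 : W + (u-a)^2 + (v+a)^2 ≤ 1
  have hmod4 : W + (u-a)^2 + (v+a)^2 ≤ 1 := by
    have hTT : TT x (n₁, q') = a + v := by
      rw [hvdef]
      show ∑ k ∈ Finset.Icc n₁ q', x k = a + ∑ k ∈ Finset.Icc p' q', x k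
      have hsplit : p' - 1 + 1 = p' := by omega
      rw [sum_Icc_split x n₁ (p'-1) q' (by omega) (by omega), hsplit]
      congr 1
      exact single_sum x hz (Finset.mem_Icc.mpr ⟨le_refl _, by omega⟩)
        (fun k h1 h2 h3 => ⟨lt_of_le_of_ne h1 (Ne.symm h3), by omega⟩)
    rcases eq_or_lt_of_le hpn with heq | hlt
    · -- p = n₁ : u = a
      have hu0 : u = a := by
        rw [hudef]
        show ∑ k ∈ Finset.Icc p q, x k = a
        exact single_sum x hz (Finset.mem_Icc.mpr ⟨by omega, by omega⟩)
          (fun k h1 h2 h3 => ⟨by omega, by omega⟩)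
      have hadm := AdmL_replace₁ (s := (n₁, q')) hL (by simp; omega)
        (by simpa using le_of_eq heq) (le_refl _)
      have := H _ hadm
      rw [val_append, val_cons, hTT] at this
      rw [hu0]
      simpa using by linarith
    · -- p < n₁
      have hu : u = TT x (p, n₁-1) + a := by
        rw [hudef]
        show ∑ k ∈ Finset.Icc p q, x k = (∑ k ∈ Finset.Icc p (n₁-1), x k) + a
        have hsplit : n₁ - 1 + 1 = n₁ := by omega
        rw [show Finset.Icc p q = Finset.Icc p q from rfl]
        rw [sum_Icc_split x p (n₁-1) q (by omega) (by omega), hsplit]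
        congr 1
        exact single_sum x hz (Finset.mem_Icc.mpr ⟨le_refl _, hnq⟩)
          (fun k h1 h2 h3 => ⟨lt_of_le_of_ne h1 (Ne.symm h3), by omega⟩)
      have hadm := AdmL_replace₂ (s := (p, n₁-1)) (s' := (n₁, q')) hL
        (by simp; omega) (by simp; omega) (le_refl _) (by simp; omega) (le_refl _)
      have := H _ hadm
      rw [val_append, val_cons, val_cons, hTT] at this
      have hTT2 : TT x (p, n₁-1) = u - a := by rw [hu]; ring
      rw [hTT2] at this
      linarith
  rw [hval]
  have := arith_core a b u v W ha hb hmod3 hmod4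
  linarith

lemma TT_gap (x : ℕ → ℝ) {n₁ n₂ : ℕ} (hz : ∀ k, n₁ < k → k < n₂ → x k = 0)
    {m : ℕ × ℕ} (h1 : n₁ < m.1) (h2 : m.2 < n₂) : TT x m = 0 := by
  apply Finset.sum_eq_zero
  intro k hk
  rw [Finset.mem_Icc] at hk
  exact hz k (by omega) (by omega)

lemma TT_self (x : ℕ → ℝ) (m : ℕ) : TT x (m, m) = x m := by simp [TT]

lemma val_eq_zero (x : ℕ → ℝ) {M : List (ℕ × ℕ)} (h : ∀ m ∈ M, TT x m = 0) :
    val x M = 0 := by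
  apply List.sum_eq_zero
  intro a ha
  simp only [List.mem_map] at ha
  obtain ⟨r, hr, rfl⟩ := ha
  rw [h r hr]; simp

lemma mem_unique {L : List (ℕ × ℕ)} (hpw : L.Pairwise fun r r' => r.2 < r'.1)
    {r r' : ℕ × ℕ} {m : ℕ} (hr : r ∈ L) (hr' : r' ∈ L)
    (h1 : r.1 ≤ m ∧ m ≤ r.2) (h2 : r'.1 ≤ m ∧ m ≤ r'.2) : r = r' := by
  rw [List.mem_iff_get] at hr hr'
  obtain ⟨i, rfl⟩ := hr
  obtain ⟨j, rfl⟩ := hr'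
  rcases lt_trichotomy i j with h | h | h
  · have := List.pairwise_iff_get.mp hpw i j h; omega
  · rw [h]
  · have := List.pairwise_iff_get.mp hpw j i h; omega

lemma bound_caseI (x : ℕ → ℝ) (n₁ n₂ : ℕ) (hn : n₁ < n₂)
    (hz : ∀ k, n₁ < k → k < n₂ → x k = 0)
    (ha : 0 < x n₁) (hb : 0 < x n₂) (H : ∀ L, AdmL L → val x L ≤ 1)
    (L : List (ℕ × ℕ)) (hL : AdmL L) (rI : ℕ × ℕ) (hrI : rI ∈ L)
    (h1 : rI.1 ≤ n₁) (h2 : n₁ ≤ rI.2) (h3 : rI.2 < n₂) :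
    val x L ≤ 1 - 2 * (x n₁ * x n₂) := by
  obtain ⟨L₁, M, rfl⟩ := List.append_of_mem hrI
  by_cases hJ : ∃ r' ∈ L₁ ++ rI :: M, r'.1 ≤ n₂ ∧ n₂ ≤ r'.2
  · obtain ⟨r', hr', hJ1, hJ2⟩ := hJ
    have hr'M : r' ∈ M := by
      rcases List.mem_append.mp hr' with h | h
      · exfalso
        have hpw := hL.2
        rw [List.pairwise_append] at hpw
        have := hpw.2.2 r' h rI (by simp)
        omega
      · rcases List.mem_cons.mp h with rfl | h
        · omega
        · exact h
    have hnr' : n₁ < r'.1 := by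
      by_contra hcon
      push_neg at hcon
      have := mem_unique hL.2 (by simp) hr' ⟨h1, h2⟩ ⟨hcon, by omega⟩
      rw [this] at h3; omega
    obtain ⟨M₁, L₂, rfl⟩ := List.append_of_mem hr'M
    -- pairwise facts
    have hpw1 : (rI :: (M₁ ++ r' :: L₂)).Pairwise (fun r r' => r.2 < r'.1) :=
      (List.pairwise_append.mp hL.2).2.1
    have hd1 : ∀ b ∈ M₁ ++ r' :: L₂, rI.2 < b.1 := (List.pairwise_cons.mp hpw1).1
    have hd2 : ∀ a ∈ M₁, ∀ b ∈ r' :: L₂, a.2 < b.1 :=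
      (List.pairwise_append.mp (List.pairwise_cons.mp hpw1).2).2.2
    have hgap : ∀ m ∈ M₁, TT x m = 0 := by
      intro m hm
      apply TT_gap x hz
      · have := hd1 m (List.mem_append_left _ hm); omega
      · have := hd2 m hm r' (by simp); omega
    have hsub : List.Sublist (L₁ ++ rI :: r' :: L₂) (L₁ ++ rI :: (M₁ ++ r' :: L₂)) := by
      apply List.Sublist.append_left
      exact List.Sublist.cons₂ rI (List.sublist_append_right M₁ (r' :: L₂))
    have hL' : AdmL (L₁ ++ rI :: r' :: L₂) :=
      ⟨fun p hp => hL.1 p (hsub.subset hp), hL.2.sublist hsub⟩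
    have hcore := core_bound x n₁ n₂ hn hz ha hb H L₁ L₂ rI.1 rI.2 r'.1 r'.2
      h1 h2 h3 hnr' hJ1 hJ2 hL'
    have hM₁ : val x M₁ = 0 := val_eq_zero x hgap
    have hveq : val x (L₁ ++ rI :: (M₁ ++ r' :: L₂)) = val x (L₁ ++ rI :: r' :: L₂) := by
      rw [val_append, val_cons, val_append, val_cons, val_append, val_cons, val_cons, hM₁]
      ring
    rw [hveq]
    exact hcore
  · -- no interval contains n₂
    push_neg at hJ
    set F := M.filter (fun m => decide (n₂ < m.1)) with hFdef
    have hFsub : List.Sublist F M := List.filter_sublist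
    have hpwL₁ : L₁.Pairwise (fun r r' => r.2 < r'.1) := (List.pairwise_append.mp hL.2).1
    have hpw1 : (rI :: M).Pairwise (fun r r' => r.2 < r'.1) := (List.pairwise_append.mp hL.2).2.1
    have hcross : ∀ a ∈ L₁, ∀ b ∈ rI :: M, a.2 < b.1 := (List.pairwise_append.mp hL.2).2.2
    have hd1 : ∀ b ∈ M, rI.2 < b.1 := (List.pairwise_cons.mp hpw1).1
    have hpwM : M.Pairwise (fun r r' => r.2 < r'.1) := (List.pairwise_cons.mp hpw1).2
    have hL' : AdmL (L₁ ++ rI :: (n₂, n₂) :: F) := by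
      constructor
      · intro p hp
        simp only [List.mem_append, List.mem_cons] at hp
        rcases hp with hp | rfl | rfl | hp
        · exact hL.1 p (by simp [hp])
        · exact hL.1 p (by simp)
        · exact le_refl _
        · exact hL.1 p (by simp [hFsub.subset hp])
      · rw [List.pairwise_append]
        refine ⟨hpwL₁, ?_, ?_⟩
        · rw [List.pairwise_cons]
          constructor
          · intro b hb
            rcases List.mem_cons.mp hb with rfl | hb
            · exact h3
            · exact hd1 b (hFsub.subset hb)
          · rw [List.pairwise_cons]
            refine ⟨?_, hpwM.sublist hFsub⟩
            intro b hb
            rw [hFdef, List.mem_filter] at hb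
            exact of_decide_eq_true hb.2
        · intro a haL c hc
          rcases List.mem_cons.mp hc with rfl | hc
          · exact hcross a haL _ (by simp)
          · rcases List.mem_cons.mp hc with rfl | hc
            · have := hcross a haL rI (by simp)
              show a.2 < n₂
              omega
            · exact hcross a haL c (by simp [hFsub.subset hc])
    have hcore := core_bound x n₁ n₂ hn hz ha hb H L₁ F rI.1 rI.2 n₂ n₂
      h1 h2 h3 hn (le_refl _) (le_refl _) hL'
    -- value computation
    have hzero : val x (M.filter (fun m => !(decide (n₂ < m.1)))) = 0 := by
      apply val_eq_zero
      intro m hm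
      rw [List.mem_filter] at hm
      have hm1 : ¬ (n₂ < m.1) := by
        have := hm.2; simpa using this
      apply TT_gap x hz
      · have := hd1 m hm.1; omega
      · have := hJ m (by simp [hm.1]) (by omega)
        omega
    have hMF : val x M = val x F := by
      have := sum_map_filter M (fun r => (TT x r)^2) (fun m => decide (n₂ < m.1))
      have hz2 : val x (M.filter fun m => !(decide (n₂ < m.1))) = 0 := hzero
      rw [val, ← this]
      rw [val] at hz2
      rw [hz2]
      rw [hFdef, val]
      ring
    have hveq : val x (L₁ ++ rI :: (n₂, n₂) :: F)
        = val x (L₁ ++ rI :: M) + (x n₂)^2 := by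
      rw [val_append, val_cons, val_cons, val_append, val_cons, hMF, TT_self]
      ring
    rw [hveq] at hcore
    nlinarith [sq_nonneg (x n₂)]

lemma bound_caseV (x : ℕ → ℝ) (n₁ n₂ : ℕ) (hn : n₁ < n₂)
    (hz : ∀ k, n₁ < k → k < n₂ → x k = 0)
    (ha : 0 < x n₁) (hb : 0 < x n₂) (H : ∀ L, AdmL L → val x L ≤ 1)
    (L : List (ℕ × ℕ)) (hL : AdmL L) (rJ : ℕ × ℕ) (hrJ : rJ ∈ L)
    (h1 : n₁ < rJ.1) (h2 : rJ.1 ≤ n₂) (h3 : n₂ ≤ rJ.2)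
    (hnoI : ∀ r ∈ L, r.1 ≤ n₁ → r.2 < n₁) :
    val x L ≤ 1 - 2 * (x n₁ * x n₂) := by
  obtain ⟨L₁, L₂, rfl⟩ := List.append_of_mem hrJ
  set F := L₁.filter (fun m => decide (m.2 < n₁)) with hFdef
  have hFsub : List.Sublist F L₁ := List.filter_sublist
  have hpwL₁ : L₁.Pairwise (fun r r' => r.2 < r'.1) := (List.pairwise_append.mp hL.2).1
  have hpw1 : (rJ :: L₂).Pairwise (fun r r' => r.2 < r'.1) := (List.pairwise_append.mp hL.2).2.1
  have hcross : ∀ a ∈ L₁, ∀ b ∈ rJ :: L₂, a.2 < b.1 := (List.pairwise_append.mp hL.2).2.2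
  have hd1 : ∀ b ∈ L₂, rJ.2 < b.1 := (List.pairwise_cons.mp hpw1).1
  have hL' : AdmL (F ++ (n₁, n₁) :: rJ :: L₂) := by
    constructor
    · intro p hp
      simp only [List.mem_append, List.mem_cons] at hp
      rcases hp with hp | rfl | rfl | hp
      · exact hL.1 p (by simp [hFsub.subset hp])
      · exact le_refl _
      · exact hL.1 p (by simp)
      · exact hL.1 p (by simp [hp])
    · rw [List.pairwise_append]
      refine ⟨hpwL₁.sublist hFsub, ?_, ?_⟩
      · rw [List.pairwise_cons]
        refine ⟨?_, hpw1⟩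
        intro b hb
        rcases List.mem_cons.mp hb with rfl | hb
        · exact h1
        · have := hd1 b hb; omega
      · intro a haF b hb
        rcases List.mem_cons.mp hb with rfl | hb
        · rw [hFdef, List.mem_filter] at haF
          exact of_decide_eq_true haF.2
        · exact hcross a (hFsub.subset haF) b hb
  have hcore := core_bound x n₁ n₂ hn hz ha hb H F L₂ n₁ n₁ rJ.1 rJ.2
    (le_refl _) (le_refl _) hn h1 h2 h3 hL'
  have hzero : val x (L₁.filter (fun m => !(decide (m.2 < n₁)))) = 0 := by
    apply val_eq_zero
    intro m hm
    rw [List.mem_filter] at hm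
    have hm1 : ¬ (m.2 < n₁) := by have := hm.2; simpa using this
    apply TT_gap x hz
    · by_contra hcon
      push_neg at hcon
      have := hnoI m (by simp [hm.1]) hcon
      omega
    · have := hcross m hm.1 rJ (by simp); omega
  have hMF : val x L₁ = val x F := by
    have := sum_map_filter L₁ (fun r => (TT x r)^2) (fun m => decide (m.2 < n₁))
    rw [val] at hzero
    rw [val, ← this, hzero, hFdef, val]
    ring
  have hveq : val x (F ++ (n₁, n₁) :: rJ :: L₂)
      = val x (L₁ ++ rJ :: L₂) + (x n₁)^2 := by
    rw [val_append, val_cons, val_cons, val_append, val_cons, hMF, TT_self]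
    ring
  rw [hveq] at hcore
  nlinarith [sq_nonneg (x n₁)]

lemma split_bound (x : ℕ → ℝ) (n₁ n₂ : ℕ) (hn : n₁ < n₂)
    (hz : ∀ k, n₁ < k → k < n₂ → x k = 0)
    (ha : 0 < x n₁) (hb : 0 < x n₂) (H : ∀ L, AdmL L → val x L ≤ 1)
    (L : List (ℕ × ℕ)) (hL : AdmL L) (r₀ : ℕ × ℕ) (hr₀ : r₀ ∈ L)
    (hsplit : ¬((r₀.1 ≤ n₁ ∧ n₁ ≤ r₀.2) ↔ (r₀.1 ≤ n₂ ∧ n₂ ≤ r₀.2))) :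
    val x L ≤ 1 - 2 * (x n₁ * x n₂) := by
  by_cases hI : ∃ r ∈ L, r.1 ≤ n₁ ∧ n₁ ≤ r.2
  · obtain ⟨r, hr, hrc⟩ := hI
    by_cases hr2 : r.1 ≤ n₂ ∧ n₂ ≤ r.2
    · -- r contains both; r₀ contains exactly one; contradiction
      exfalso
      by_cases hc1 : r₀.1 ≤ n₁ ∧ n₁ ≤ r₀.2
      · have := mem_unique hL.2 hr₀ hr hc1 hrc
        rw [this] at hsplit
        exact hsplit (iff_of_true hrc hr2)
      · have hc2 : r₀.1 ≤ n₂ ∧ n₂ ≤ r₀.2 := by tauto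
        have := mem_unique hL.2 hr₀ hr hc2 hr2
        rw [this] at hsplit
        exact hsplit (iff_of_true hrc hr2)
    · -- r is type I
      have hq : r.2 < n₂ := by
        push_neg at hr2
        have := hr2 (by omega)
        omega
      exact bound_caseI x n₁ n₂ hn hz ha hb H L hL r hr hrc.1 hrc.2 hq
  · -- no interval contains n₁; r₀ must contain n₂
    push_neg at hI
    have hc1 : ¬(r₀.1 ≤ n₁ ∧ n₁ ≤ r₀.2) := by
      intro hcon
      have := hI r₀ hr₀ hcon.1
      omega
    have hc2 : r₀.1 ≤ n₂ ∧ n₂ ≤ r₀.2 := by tauto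
    have h1 : n₁ < r₀.1 := by
      by_contra hcon
      push_neg at hcon
      exact hc1 ⟨hcon, by omega⟩
    exact bound_caseV x n₁ n₂ hn hz ha hb H L hL r₀ hr₀ h1 hc2.1 hc2.2 hI

noncomputable section
def chi (m : ℕ) (r : ℕ × ℕ) : ℝ := if r.1 ≤ m ∧ m ≤ r.2 then 1 else 0
def pert (x : ℕ → ℝ) (n₁ n₂ : ℕ) (s : ℝ) : ℕ → ℝ :=
  fun k => x k + s * ((if k = n₁ then 1 else 0) - (if k = n₂ then 1 else 0))
end

lemma chi_cases (m : ℕ) (r : ℕ × ℕ) : chi m r = 0 ∨ chi m r = 1 := by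
  unfold chi; split <;> simp

lemma chi_nonneg (m : ℕ) (r : ℕ × ℕ) : 0 ≤ chi m r := by
  rcases chi_cases m r with h | h <;> rw [h] <;> norm_num

lemma chi_sum_le (m : ℕ) : ∀ L : List (ℕ × ℕ), L.Pairwise (fun r r' => r.2 < r'.1) →
    (L.map (chi m)).sum ≤ 1 := by
  intro L
  induction L with
  | nil => simp
  | cons r L ih =>
    intro hpw
    rw [List.pairwise_cons] at hpw
    simp only [List.map_cons, List.sum_cons]
    by_cases hc : r.1 ≤ m ∧ m ≤ r.2
    · have hz : (L.map (chi m)).sum = 0 := by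
        apply List.sum_eq_zero
        intro a ha
        simp only [List.mem_map] at ha
        obtain ⟨r', hr', rfl⟩ := ha
        have := hpw.1 r' hr'
        unfold chi
        rw [if_neg]
        omega
      rw [hz]
      simp [chi, hc]
    · rw [show chi m r = 0 from by simp [chi, hc]]
      simpa using ih hpw.2

lemma chi_sum_nonneg (m : ℕ) (L : List (ℕ × ℕ)) : 0 ≤ (L.map (chi m)).sum := by
  apply List.sum_nonneg
  intro a ha
  simp only [List.mem_map] at ha
  obtain ⟨r', hr', rfl⟩ := ha
  exact chi_nonneg m r'

lemma TT_pert (x : ℕ → ℝ) (n₁ n₂ : ℕ) (s : ℝ) (r : ℕ × ℕ) :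
    TT (pert x n₁ n₂ s) r = TT x r + s * (chi n₁ r - chi n₂ r) := by
  unfold TT pert
  rw [Finset.sum_add_distrib]
  congr 1
  rw [← Finset.mul_sum]
  congr 1
  rw [Finset.sum_sub_distrib]
  rw [Finset.sum_ite_eq' (Finset.Icc r.1 r.2) n₁ (fun _ => (1:ℝ)),
      Finset.sum_ite_eq' (Finset.Icc r.1 r.2) n₂ (fun _ => (1:ℝ))]
  simp [chi, Finset.mem_Icc]

lemma sq_pert_bound (T s c₁ c₂ : ℝ) (hT : |T| ≤ 1) (h₁ : c₁ = 0 ∨ c₁ = 1)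
    (h₂ : c₂ = 0 ∨ c₂ = 1) :
    (T + s * (c₁ - c₂))^2 ≤ T^2 + (2*|s| + s^2) * (c₁ + c₂) := by
  have h1 := le_abs_self (s*T)
  have h2 := neg_abs_le (s*T)
  have h3 : |s*T| ≤ |s| := by
    rw [abs_mul]
    calc |s| * |T| ≤ |s| * 1 := mul_le_mul_of_nonneg_left hT (abs_nonneg s)
    _ = |s| := mul_one _
  have h4 := sq_abs s
  have h5 := abs_nonneg s
  rcases h₁ with rfl | rfl <;> rcases h₂ with rfl | rfl <;> nlinarith [sq_nonneg s]

lemma sum_map_mul_left {α : Type*} (l : List α) (c : ℝ) (f : α → ℝ) :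
    (l.map fun r => c * f r).sum = c * (l.map f).sum := by
  induction l with
  | nil => simp
  | cons a l ih => simp [ih]; ring

lemma TT_le_one {x : ℕ → ℝ} (H : ∀ L, AdmL L → val x L ≤ 1) (r : ℕ × ℕ)
    (hr : r.1 ≤ r.2) : |TT x r| ≤ 1 := by
  have := H [r] ⟨by simpa using hr, by simp⟩
  simp only [val, List.map_cons, List.map_nil, List.sum_cons, List.sum_nil, add_zero] at this
  rw [abs_le]
  constructor <;> nlinarith

lemma perturb_bound (x : ℕ → ℝ) (n₁ n₂ : ℕ) (hn : n₁ < n₂)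
    (hz : ∀ k, n₁ < k → k < n₂ → x k = 0)
    (ha : 0 < x n₁) (hb : 0 < x n₂) (H : ∀ L, AdmL L → val x L ≤ 1)
    (s : ℝ) (hs : |s| ≤ x n₁ * x n₂ / 8) :
    ∀ L, AdmL L → val (pert x n₁ n₂ s) L ≤ 1 := by
  have ha1 : x n₁ ≤ 1 := by
    have := TT_le_one H (n₁, n₁) (le_refl _)
    rw [TT_self] at this
    exact le_trans (le_abs_self _) this
  have hb1 : x n₂ ≤ 1 := by
    have := TT_le_one H (n₂, n₂) (le_refl _)
    rw [TT_self] at this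
    exact le_trans (le_abs_self _) this
  intro L hL
  by_cases hsp : ∀ r ∈ L, ((r.1 ≤ n₁ ∧ n₁ ≤ r.2) ↔ (r.1 ≤ n₂ ∧ n₂ ≤ r.2))
  · have heq : val (pert x n₁ n₂ s) L = val x L := by
      unfold val
      congr 1
      apply List.map_congr_left
      intro r hr
      rw [TT_pert]
      have : chi n₁ r = chi n₂ r := by
        unfold chi
        exact if_congr (hsp r hr) rfl rfl
      rw [this]
      ring
    rw [heq]
    exact H L hL
  · rw [not_forall] at hsp
    obtain ⟨r₀, hr₀'⟩ := hsp
    rw [Classical.not_imp] at hr₀'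
    obtain ⟨hr₀, hiff⟩ := hr₀'
    have hbase := split_bound x n₁ n₂ hn hz ha hb H L hL r₀ hr₀ hiff
    have hpoint : ∀ r ∈ L, (TT (pert x n₁ n₂ s) r)^2 ≤
        (TT x r)^2 + (2*|s| + s^2) * (chi n₁ r + chi n₂ r) := by
      intro r hr
      rw [TT_pert]
      exact sq_pert_bound (TT x r) s (chi n₁ r) (chi n₂ r)
        (TT_le_one H r (hL.1 r hr)) (chi_cases n₁ r) (chi_cases n₂ r)
    have hsum : val (pert x n₁ n₂ s) L ≤
        val x L + (2*|s| + s^2) * ((L.map (chi n₁)).sum + (L.map (chi n₂)).sum) := by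
      unfold val
      calc (L.map fun r => (TT (pert x n₁ n₂ s) r)^2).sum
          ≤ (L.map fun r => (TT x r)^2 + (2*|s| + s^2) * (chi n₁ r + chi n₂ r)).sum := by
            apply List.sum_le_sum
            intro r hr
            exact hpoint r hr
        _ = (L.map fun r => (TT x r)^2).sum
            + (2*|s| + s^2) * ((L.map (chi n₁)).sum + (L.map (chi n₂)).sum) := by
            rw [sum_map_add]
            congr 1
            rw [show (L.map fun r => (2*|s| + s^2) * (chi n₁ r + chi n₂ r))
                = (L.map fun r => (2*|s| + s^2) * (chi n₁ r + chi n₂ r)) from rfl,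
              sum_map_mul_left L (2*|s| + s^2) (fun r => chi n₁ r + chi n₂ r)]
            congr 1
            exact sum_map_add L (chi n₁) (chi n₂)
    have hc1 := chi_sum_le n₁ L hL.2
    have hc2 := chi_sum_le n₂ L hL.2
    have hc1' := chi_sum_nonneg n₁ L
    have hc2' := chi_sum_nonneg n₂ L
    have hcoef : (0:ℝ) ≤ 2*|s| + s^2 := by positivity
    have habs := abs_nonneg s
    have key : (2*|s| + s^2) * ((L.map (chi n₁)).sum + (L.map (chi n₂)).sum)
        ≤ (2*|s| + s^2) * 2 := mul_le_mul_of_nonneg_left (by linarith) hcoef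
    have h8 : |s| * |s| ≤ (x n₁ * x n₂/8) * (x n₁ * x n₂/8) :=
      mul_le_mul hs hs habs (by positivity)
    have h9 : x n₁ * x n₂ ≤ 1 := mul_le_one₀ ha1 hb.le hb1
    have h10 : s^2 = |s| * |s| := by rw [← sq_abs]; ring
    have key2 : (2*|s| + s^2) * 2 ≤ 2 * (x n₁ * x n₂) := by nlinarith [mul_pos ha hb]
    linarith

lemma TT_neg (x : ℕ → ℝ) (r : ℕ × ℕ) : TT (fun k => -(x k)) r = -(TT x r) := by
  unfold TT
  rw [Finset.sum_neg_distrib]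

lemma val_neg (x : ℕ → ℝ) (L : List (ℕ × ℕ)) : val (fun k => -(x k)) L = val x L := by
  unfold val
  congr 1
  apply List.map_congr_left
  intro r _
  rw [TT_neg]
  ring

lemma val_nonneg (x : ℕ → ℝ) (L : List (ℕ × ℕ)) : 0 ≤ val x L := by
  apply List.sum_nonneg; intro a ha
  simp only [List.mem_map] at ha; obtain ⟨r, -, rfl⟩ := ha; positivity

lemma val_mem_estimates (x : ℕ → ℝ) (L : List (ℕ × ℕ)) (h : AdmL L) :
    Real.sqrt (val x L) ∈ estimates x := by
  refine ⟨L.length, L.get, ⟨fun i => h.1 _ (L.get_mem i), fun i j hij => ?_⟩, ?_⟩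
  · exact List.pairwise_iff_get.mp h.2 i j hij
  · congr 1
    rw [val]
    conv_lhs => rw [← List.ofFn_get L]
    rw [List.map_ofFn, List.sum_ofFn]
    rfl

lemma estimate_eq (x : ℕ → ℝ) {r : ℝ} (hr : r ∈ estimates x) :
    ∃ L, AdmL L ∧ r = Real.sqrt (val x L) := by
  obtain ⟨n, f, hf, rfl⟩ := hr
  refine ⟨List.ofFn f, ⟨?_, ?_⟩, ?_⟩
  · intro p hp; rw [List.mem_ofFn] at hp; obtain ⟨i, rfl⟩ := hp; exact hf.1 i
  · rw [List.pairwise_iff_get]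
    intro i j hij
    simp only [List.get_ofFn]
    exact hf.2 _ _ (by simpa using hij)
  · congr 1
    rw [val, List.map_ofFn, List.sum_ofFn]
    rfl

lemma zero_mem_estimates (x : ℕ → ℝ) : (0:ℝ) ∈ estimates x := by
  have := val_mem_estimates x [] ⟨by simp, by simp⟩
  simpa [val] using this

lemma all_le_one {x : ℕ → ℝ} (hx : x ∈ ballJ) : ∀ L, AdmL L → val x L ≤ 1 := by
  intro L hL
  have h1 : Real.sqrt (val x L) ≤ 1 :=
    le_trans (le_csSup hx.1 (val_mem_estimates x L hL)) hx.2
  have h0 := val_nonneg x L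
  nlinarith [Real.sq_sqrt h0, Real.sqrt_nonneg (val x L)]

lemma ballJ_of {x : ℕ → ℝ} (h : ∀ L, AdmL L → val x L ≤ 1) : x ∈ ballJ := by
  have hb : ∀ r ∈ estimates x, r ≤ 1 := by
    intro r hr
    obtain ⟨L, hL, rfl⟩ := estimate_eq x hr
    calc Real.sqrt (val x L) ≤ Real.sqrt 1 := Real.sqrt_le_sqrt (h L hL)
    _ = 1 := Real.sqrt_one
  exact ⟨⟨1, hb⟩, csSup_le ⟨0, zero_mem_estimates x⟩ hb⟩

theorem stmt10 (x : ℕ → ℝ) (hx : x ∈ Set.extremePoints ℝ ballJ)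
    (n₁ n₂ : ℕ) (h : Consecutive x n₁ n₂) : x n₁ * x n₂ < 0 := by
  obtain ⟨h1, h2, hn, hz⟩ := h
  have hx1 : x n₁ ≠ 0 := h1
  have hx2 : x n₂ ≠ 0 := h2
  by_contra hcon
  push_neg at hcon
  have hprod : 0 < x n₁ * x n₂ := lt_of_le_of_ne hcon (Ne.symm (mul_ne_zero hx1 hx2))
  have H : ∀ L, AdmL L → val x L ≤ 1 := all_le_one hx.1
  have P : ∀ s : ℝ, |s| ≤ x n₁ * x n₂ / 8 → ∀ L, AdmL L → val (pert x n₁ n₂ s) L ≤ 1 := by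
    rcases mul_pos_iff.mp hprod with ⟨ha, hb⟩ | ⟨ha, hb⟩
    · exact fun s hs => perturb_bound x n₁ n₂ hn hz ha hb H s hs
    · intro s hs L hL
      have hz' : ∀ k, n₁ < k → k < n₂ → (fun k => -(x k)) k = 0 := by
        intro k hk1 hk2; simp [hz k hk1 hk2]
      have H' : ∀ L, AdmL L → val (fun k => -(x k)) L ≤ 1 := fun L hL => by
        rw [val_neg]; exact H L hL
      have ha' : 0 < (fun k => -(x k)) n₁ := by simpa using ha
      have hb' : 0 < (fun k => -(x k)) n₂ := by simpa using hb
      have hs' : |(-s)| ≤ (fun k => -(x k)) n₁ * (fun k => -(x k)) n₂ / 8 := by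
        simp only [abs_neg, neg_mul_neg]
        exact hs
      have hmain := perturb_bound (fun k => -(x k)) n₁ n₂ hn hz' ha' hb' H' (-s) hs' L hL
      have hfun : (fun k => -((pert x n₁ n₂ s) k)) = pert (fun k => -(x k)) n₁ n₂ (-s) := by
        funext k; simp [pert]; ring
      calc val (pert x n₁ n₂ s) L
          = val (fun k => -((pert x n₁ n₂ s) k)) L := (val_neg _ L).symm
        _ = val (pert (fun k => -(x k)) n₁ n₂ (-s)) L := by rw [hfun]
        _ ≤ 1 := hmain
  set s := x n₁ * x n₂ / 8 with hsdef
  have hspos : 0 < s := by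
    rw [hsdef]; exact div_pos hprod (by norm_num)
  have hy₁ : pert x n₁ n₂ s ∈ ballJ := ballJ_of (P s (by rw [abs_of_pos hspos]))
  have hy₂ : pert x n₁ n₂ (-s) ∈ ballJ := ballJ_of (P (-s) (by rw [abs_neg, abs_of_pos hspos]))
  have hseg : x ∈ openSegment ℝ (pert x n₁ n₂ s) (pert x n₁ n₂ (-s)) := by
    refine ⟨1/2, 1/2, by norm_num, by norm_num, by norm_num, ?_⟩
    funext k
    simp only [Pi.add_apply, Pi.smul_apply, smul_eq_mul, pert]
    ring
  have hext := (hx.2 hy₁ hy₂ hseg)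
  have hval := congrFun hext n₁
  have hne : n₁ ≠ n₂ := hn.ne
  simp only [pert, if_pos rfl, if_neg hne, if_true, sub_zero, mul_one] at hval
  have hs0 : s = 0 := by linarith [hval.le, hval.ge]
  exact absurd hs0 (ne_of_gt hspos)
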